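/- For n = m, there is no Lie subsuperalgebra L of gl(n|n) such that the restriction of the adjoint map ad to L is a Lie superalgebra isomorphism onto the Lie superalgebra of all graded derivations of M(n|n). -/

import Mathlib

noncomputable section

/-- The `ℤ₂`-graded algebra `M(n|m)` of complex `(n+m)×(n+m)` matrices. -/
abbrev GMat (n m : ℕ) := Matrix (Fin (n + m)) (Fin (n + m)) ℂ

/-- The "body" matrix algebra `M_{max n m}(ℂ)`. -/
abbrev BMat (n m : ℕ) := Matrix (Fin (max n m)) (Fin (max n m)) ℂ

namespace GMat

/-- Block degree of an index: `false` for the first (size `n`) block. -/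
def bdeg (n m : ℕ) (i : Fin (n + m)) : Bool := decide (n ≤ i.val)

/-- `M` is homogeneous of degree `ε` (block-diagonal for `ε = false`,
block-off-diagonal for `ε = true`). -/
def IsHomog (n m : ℕ) (ε : Bool) (M : GMat n m) : Prop :=
  ∀ i j, Bool.xor (bdeg n m i) (bdeg n m j) ≠ ε → M i j = 0

/-- The Koszul sign `(-1)^{ab}`. -/
def sgn (a b : Bool) : ℂ := if a && b then -1 else 1

/-- Graded commutator of homogeneous elements of degrees `a`, `b`. -/
def gcomm {n m : ℕ} (a b : Bool) (A B : GMat n m) : GMat n m := A * B - sgn a b • (B * A)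

/-- Graded anticommutator of homogeneous elements of degrees `a`, `b`. -/
def gacomm {n m : ℕ} (a b : Bool) (A B : GMat n m) : GMat n m := A * B + sgn a b • (B * A)

/-- The grading matrix `Γ = diag(1_n, -1_m)`. -/
def Gamma (n m : ℕ) : GMat n m := Matrix.diagonal fun i => if bdeg n m i then -1 else 1

/-- `D` is a graded derivation of `M(n|m)` of degree `ε`. -/
def IsGDer (n m : ℕ) (ε : Bool) (D : GMat n m → GMat n m) : Prop :=
  (∀ A B, D (A + B) = D A + D B) ∧
  (∀ (c : ℂ) A, D (c • A) = c • D A) ∧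
  (∀ (a : Bool) M, IsHomog n m a M → IsHomog n m (Bool.xor a ε) (D M)) ∧
  (∀ (a : Bool) (M M' : GMat n m), IsHomog n m a M →
    D (M * M') = D M * M' + sgn ε a • (M * D M'))

/-- The graded adjoint action `ad E` of a homogeneous matrix `E` of degree `a`:
on homogeneous `M` it is the graded commutator `[E,M]_g`. -/
def gad (n m : ℕ) (a : Bool) (E : GMat n m) : GMat n m → GMat n m :=
  fun M => E * M - (if a then Gamma n m * M * Gamma n m * E else M * E)

/-- The supertrace `str M = Tr M₁ - Tr M₄`. -/
def str (n m : ℕ) (M : GMat n m) : ℂ :=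
  ∑ i, (if bdeg n m i then (-1 : ℂ) else 1) * M i i

end GMat



namespace GMat

/-- Even part of a matrix. -/
def evp (n m : ℕ) (A : GMat n m) : GMat n m :=
  ((1 : ℂ)/2) • (A + Gamma n m * A * Gamma n m)

/-- Odd part of a matrix. -/
def odp (n m : ℕ) (A : GMat n m) : GMat n m :=
  ((1 : ℂ)/2) • (A - Gamma n m * A * Gamma n m)

/-- The super-adjoint action of an arbitrary matrix `A`. -/
def adFull (n m : ℕ) (A : GMat n m) : GMat n m → GMat n m :=
  fun M => gad n m false (evp n m A) M + gad n m true (odp n m A) M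

end GMat

namespace GMat

variable {n : ℕ}

lemma gamma_sq (n : ℕ) : Gamma n n * Gamma n n = 1 := by
  have h : (fun i => (if bdeg n n i then (-1:ℂ) else 1) * (if bdeg n n i then -1 else 1))
      = fun _ => (1:ℂ) := by
    funext i; split <;> norm_num
  rw [Gamma, Matrix.diagonal_mul_diagonal, h, Matrix.diagonal_one]

lemma gammaConj {a : Bool} {M : GMat n n} (h : IsHomog n n a M) :
    Gamma n n * M * Gamma n n = (if a then (-1:ℂ) else 1) • M := by
  ext i j
  by_cases hM : M i j = 0
  · simp [Gamma, Matrix.mul_diagonal, Matrix.diagonal_mul, hM]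
  · have hx : Bool.xor (bdeg n n i) (bdeg n n j) = a := by
      by_contra hc; exact hM (h i j hc)
    simp only [Gamma, Matrix.mul_diagonal, Matrix.diagonal_mul, Matrix.smul_apply, smul_eq_mul]
    cases hbi : bdeg n n i <;> cases hbj : bdeg n n j <;>
      simp_all

lemma isHomog_mul {a b : Bool} {A B : GMat n n} (hA : IsHomog n n a A)
    (hB : IsHomog n n b B) : IsHomog n n (Bool.xor a b) (A * B) := by
  intro i j hij
  rw [Matrix.mul_apply]
  apply Finset.sum_eq_zero
  intro k _
  by_cases h1 : Bool.xor (bdeg n n i) (bdeg n n k) = a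
  · have h2 : Bool.xor (bdeg n n k) (bdeg n n j) ≠ b := by
      intro h2; apply hij
      cases hbi : bdeg n n i <;> cases hbk : bdeg n n k <;> cases hbj : bdeg n n j <;>
        simp_all
    rw [hB k j h2, mul_zero]
  · rw [hA i k h1, zero_mul]

lemma isHomog_sub {a : Bool} {A B : GMat n n} (hA : IsHomog n n a A)
    (hB : IsHomog n n a B) : IsHomog n n a (A - B) := by
  intro i j hij
  simp [hA i j hij, hB i j hij]

lemma isHomog_smul {a : Bool} {A : GMat n n} (c : ℂ) (hA : IsHomog n n a A) :
    IsHomog n n a (c • A) := by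
  intro i j hij
  simp [hA i j hij]

lemma conj_mul (A B : GMat n n) :
    Gamma n n * (A * B) * Gamma n n = (Gamma n n * A * Gamma n n) * (Gamma n n * B * Gamma n n) := by
  have h : (Gamma n n * A * Gamma n n) * (Gamma n n * B * Gamma n n)
      = Gamma n n * A * ((Gamma n n * Gamma n n) * (B * Gamma n n)) := by noncomm_ring
  rw [h, gamma_sq]; noncomm_ring

lemma isGDer_gad_odd (E : GMat n n) (hE : IsHomog n n true E) :
    IsGDer n n true (gad n n true E) := by
  refine ⟨?_, ?_, ?_, ?_⟩
  · intro A B; simp only [gad, if_true]; noncomm_ring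
  · intro c A
    simp only [gad, if_true, Matrix.mul_smul, Matrix.smul_mul, smul_sub]
  · intro a M hM
    simp only [gad, if_true, Bool.xor_true]
    rw [gammaConj hM]
    have h1 : IsHomog n n (!a) (E * M) := by
      have h := isHomog_mul hE hM
      rwa [Bool.xor_comm, Bool.xor_true] at h
    have h2 : IsHomog n n (!a) (((if a then (-1:ℂ) else 1) • M) * E) := by
      rw [Matrix.smul_mul]
      apply isHomog_smul
      have h := isHomog_mul hM hE
      rwa [Bool.xor_true] at h
    exact isHomog_sub h1 h2
  · intro a M M' hM
    simp only [gad, if_true]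
    have hMM : Gamma n n * (M * M') * Gamma n n
        = (if a then (-1:ℂ) else 1) • (M * (Gamma n n * M' * Gamma n n)) := by
      rw [conj_mul, gammaConj hM, Matrix.smul_mul, Matrix.mul_assoc]
    rw [hMM, gammaConj hM]
    cases a
    · rw [show (if (false : Bool) then (-1:ℂ) else 1) = 1 from rfl,
        show sgn true false = 1 from rfl, one_smul, one_smul, one_smul]
      noncomm_ring
    · rw [show (if (true : Bool) then (-1:ℂ) else 1) = -1 from rfl,
        show sgn true true = -1 from rfl]
      simp only [neg_smul, one_smul]
      noncomm_ring

lemma gad_odd_inj {E F : GMat n n} (hE : IsHomog n n true E) (hF : IsHomog n n true F)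
    (h : gad n n true E = gad n n true F) : E = F := by
  ext i j
  by_cases hij : i = j
  · subst hij
    rw [hE i i (by simp), hF i i (by simp)]
  · have hhom : IsHomog n n false (Matrix.single j j (1:ℂ)) := by
      intro p q hpq
      apply Matrix.single_apply_of_ne
      rintro ⟨rfl, rfl⟩
      simp at hpq
    have h' := congrFun h (Matrix.single j j 1)
    simp only [gad, if_true] at h'
    rw [gammaConj hhom] at h'
    simp only [Bool.false_eq_true, if_false, one_smul] at h'
    have h2 := congrFun (congrFun h' i) j
    simp [Matrix.sub_apply, hij] at h2
    exact h2

/-- The odd matrix with identity in the upper-right block. -/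
def offX (n : ℕ) : GMat n n := Matrix.of fun i j => if j.val = i.val + n then 1 else 0

/-- The odd matrix with identity in the lower-left block. -/
def offY (n : ℕ) : GMat n n := Matrix.of fun i j => if i.val = j.val + n then 1 else 0

lemma offX_homog (n : ℕ) : IsHomog n n true (offX n) := by
  intro i j hij
  simp only [offX, Matrix.of_apply, ite_eq_right_iff]
  intro hj
  exfalso
  apply hij
  have h1 : ¬ (n ≤ i.val) := by omega
  have h2 : n ≤ j.val := by omega
  simp [bdeg, h1, h2]

lemma offY_homog (n : ℕ) : IsHomog n n true (offY n) := by
  intro i j hij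
  simp only [offY, Matrix.of_apply, ite_eq_right_iff]
  intro hj
  exfalso
  apply hij
  have h1 : n ≤ i.val := by omega
  have h2 : ¬ (n ≤ j.val) := by omega
  simp [bdeg, h1, h2]

lemma offXY (n : ℕ) : offX n * offY n + offY n * offX n = 1 := by
  ext i j
  rw [Matrix.add_apply, Matrix.mul_apply, Matrix.mul_apply, Matrix.one_apply]
  rcases lt_or_ge i.val n with hi | hi
  · have h2 : ∑ k, offY n i k * offX n k j = 0 := by
      apply Finset.sum_eq_zero; intro k _
      have hyk : offY n i k = 0 := by
        simp only [offY, Matrix.of_apply, ite_eq_right_iff]; omega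
      rw [hyk, zero_mul]
    have h1 : ∑ k, offX n i k * offY n k j = if i = j then 1 else 0 := by
      rw [Finset.sum_eq_single (⟨i.val + n, by omega⟩ : Fin (n+n))]
      · by_cases hij : i = j
        · subst hij; simp [offX, offY]
        · have hne : ¬ ((i.val + n : ℕ) = j.val + n) := by
            intro hc; exact hij (Fin.ext (by omega))
          simp [offX, offY, hne, hij]
          exact fun hc => hij (Fin.ext hc)
      · intro k _ hk
        have hxk : offX n i k = 0 := by
          simp only [offX, Matrix.of_apply, ite_eq_right_iff]
          intro hc; exact absurd (Fin.ext hc) hk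
        rw [hxk, zero_mul]
      · intro hmem; exact absurd (Finset.mem_univ _) hmem
    rw [h1, h2, add_zero]
  · have h1 : ∑ k, offX n i k * offY n k j = 0 := by
      apply Finset.sum_eq_zero; intro k _
      have hxk : offX n i k = 0 := by
        simp only [offX, Matrix.of_apply, ite_eq_right_iff]
        intro hc; exfalso; omega
      rw [hxk, zero_mul]
    have h2 : ∑ k, offY n i k * offX n k j = if i = j then 1 else 0 := by
      rw [Finset.sum_eq_single (⟨i.val - n, by omega⟩ : Fin (n+n))]
      · by_cases hij : i = j
        · subst hij
          have e1 : (i.val : ℕ) = (i.val - n) + n := by omega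
          simp [offX, offY, ← e1]
        · have hne : ¬ ((i.val : ℕ) = (i.val - n) + n ∧ (j.val : ℕ) = (i.val - n) + n) ∨ True := Or.inr trivial
          have hne2 : ¬ ((j.val : ℕ) = (i.val - n) + n) := by
            intro hc; exact hij (Fin.ext (by omega))
          simp [offX, offY, hne2, hij]
      · intro k _ hk
        have hyk : offY n i k = 0 := by
          simp only [offY, Matrix.of_apply, ite_eq_right_iff]
          intro hc
          exact absurd (Fin.ext (show k.val = i.val - n by omega)) hk
        rw [hyk, zero_mul]
      · intro hmem; exact absurd (Finset.mem_univ _) hmem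
    rw [h1, h2, zero_add]

end GMat

/-- For `n = m` there is no Lie subsuperalgebra `L` of `gl(n|n)` such that the
restriction of `ad` to `L` is a Lie superalgebra isomorphism onto the graded
derivations of `M(n|n)`. -/
theorem no_subsuperalgebra_ad_iso (n : ℕ) (hn : 0 < n) :
    ¬ ∃ S : Set (GMat n n),
      (0 ∈ S) ∧
      (∀ A ∈ S, ∀ B ∈ S, A + B ∈ S) ∧
      (∀ (c : ℂ), ∀ A ∈ S, c • A ∈ S) ∧
      (∀ A ∈ S, GMat.evp n n A ∈ S) ∧
      (∀ (a b : Bool), ∀ A ∈ S, ∀ B ∈ S, GMat.IsHomog n n a A →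
        GMat.IsHomog n n b B → GMat.gcomm a b A B ∈ S) ∧
      (∀ A ∈ S, ∀ B ∈ S, GMat.adFull n n A = GMat.adFull n n B → A = B) ∧
      (∀ (ε : Bool) (D : GMat n n → GMat n n), GMat.IsGDer n n ε D →
        ∃ E ∈ S, GMat.IsHomog n n ε E ∧ D = GMat.gad n n ε E) := by
  rintro ⟨S, h0, hAdd, hSmul, hEvp, hGcomm, hInj, hSur⟩
  obtain ⟨E1, hE1S, hE1h, hE1⟩ := hSur true (GMat.gad n n true (GMat.offX n))
    (GMat.isGDer_gad_odd _ (GMat.offX_homog n))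
  have hx : E1 = GMat.offX n := GMat.gad_odd_inj hE1h (GMat.offX_homog n) hE1.symm
  obtain ⟨E2, hE2S, hE2h, hE2⟩ := hSur true (GMat.gad n n true (GMat.offY n))
    (GMat.isGDer_gad_odd _ (GMat.offY_homog n))
  have hy : E2 = GMat.offY n := GMat.gad_odd_inj hE2h (GMat.offY_homog n) hE2.symm
  have h1S : (1 : GMat n n) ∈ S := by
    have hmem := hGcomm true true E1 hE1S E2 hE2S hE1h hE2h
    have heq : GMat.gcomm true true E1 E2 = 1 := by
      rw [GMat.gcomm, hx, hy]
      have : GMat.sgn true true = -1 := rfl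
      rw [this, neg_smul, one_smul, sub_neg_eq_add, GMat.offXY]
    rwa [heq] at hmem
  have he1 : GMat.evp n n (1 : GMat n n) = 1 := by
    rw [GMat.evp, mul_one, GMat.gamma_sq, ← two_smul ℂ (1 : GMat n n), smul_smul]
    norm_num
  have ho1 : GMat.odp n n (1 : GMat n n) = 0 := by
    rw [GMat.odp, mul_one, GMat.gamma_sq, sub_self, smul_zero]
  have he0 : GMat.evp n n (0 : GMat n n) = 0 := by
    simp [GMat.evp]
  have ho0 : GMat.odp n n (0 : GMat n n) = 0 := by
    simp [GMat.odp]
  have hAd : GMat.adFull n n (1 : GMat n n) = GMat.adFull n n 0 := by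
    funext M
    rw [GMat.adFull, GMat.adFull, he1, ho1, he0, ho0]
    simp [GMat.gad]
  have h10 := hInj 1 h1S 0 h0 hAd
  have := congrFun (congrFun h10 ⟨0, by omega⟩) ⟨0, by omega⟩
  simp [Matrix.one_apply] at this


end
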